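/- Let n be a positive integer with n ≡ 2 (mod 4), say n = 4p+2, and suppose x_j, y_j, z_j are defined from quasiperiodic sequences (a_j, b_j, c_j) by x_j = b_{j+1}/(a_j a_{j+1}), y_j = a_j/(b_{j+1}c_j), z_j = c_{j+1}/(a_{j+1}b_j), where a_{j+n} = a_j t_j/t_{j+3}, b_{j+n} = b_j t_j/t_{j+2}, c_{j+n} = c_j t_j/t_{j+1} for a 4-periodic sequence t with t₀t₁t₂t₃ = 1. Then ∏_{j=0}^{2p} (x_{2j}² y_{2j} z_{2j+1}) / (x_{2j+1}² y_{2j+1} z_{2j}) = (t₀t₂)/(t₁t₃). -/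

import Mathlib

open scoped BigOperators

lemma telescope_prod_div (f : ℕ → ℝ) (hf : ∀ k, f k ≠ 0) (n : ℕ) :
    ∏ j ∈ Finset.range n, f (j + 1) / f j = f n / f 0 := by
  induction n with
  | zero => simp [div_self (hf 0)]
  | succ n ih =>
    rw [Finset.prod_range_succ, ih]
    field_simp
    rw [mul_div_mul_left _ _ (hf n)]

/-- **The projective invariant `αγ/β` in `(x,y,z)`-coordinates for `n ≡ 2 (mod 4)`.**
Let `n = 4p+2` and suppose `x_j, y_j, z_j` are defined from quasiperiodic sequences
`(a_j, b_j, c_j)` of nonzero scalars by `x_j = b_{j+1}/(a_j a_{j+1})`,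
`y_j = a_j/(b_{j+1}c_j)`, `z_j = c_{j+1}/(a_{j+1}b_j)`, where
`a_{j+n} = a_j t_j/t_{j+3}`, `b_{j+n} = b_j t_j/t_{j+2}`, `c_{j+n} = c_j t_j/t_{j+1}` for a
4-periodic sequence `t` with `t₀t₁t₂t₃ = 1`. Then
`∏_{j=0}^{2p} (x_{2j}² y_{2j} z_{2j+1}) / (x_{2j+1}² y_{2j+1} z_{2j}) = (t₀t₂)/(t₁t₃)`. -/
theorem xyz_invariant_formula_n_mod4_eq_two (p : ℕ) (a b c t x y z : ℤ → ℝ)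
    (ha0 : ∀ j, a j ≠ 0) (hb0 : ∀ j, b j ≠ 0) (hc0 : ∀ j, c j ≠ 0)
    (ht0 : ∀ j, t j ≠ 0) (htper : ∀ j, t (j + 4) = t j)
    (htprod : t 0 * t 1 * t 2 * t 3 = 1)
    (haq : ∀ j, a (j + (4 * (p : ℤ) + 2)) = a j * (t j / t (j + 3)))
    (hbq : ∀ j, b (j + (4 * (p : ℤ) + 2)) = b j * (t j / t (j + 2)))
    (hcq : ∀ j, c (j + (4 * (p : ℤ) + 2)) = c j * (t j / t (j + 1)))
    (hx : ∀ j, x j = b (j + 1) / (a j * a (j + 1)))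
    (hy : ∀ j, y j = a j / (b (j + 1) * c j))
    (hz : ∀ j, z j = c (j + 1) / (a (j + 1) * b j)) :
    ∏ j ∈ Finset.range (2 * p + 1),
        (x (2 * (j : ℤ)) ^ 2 * y (2 * (j : ℤ)) * z (2 * (j : ℤ) + 1)) /
          (x (2 * (j : ℤ) + 1) ^ 2 * y (2 * (j : ℤ) + 1) * z (2 * (j : ℤ))) =
      (t 0 * t 2) / (t 1 * t 3) := by
  set f : ℕ → ℝ := fun k => a (2 * (k : ℤ)) * c (2 * (k : ℤ)) / b (2 * (k : ℤ)) with hf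
  have hf0 : ∀ k, f k ≠ 0 := fun k =>
    div_ne_zero (mul_ne_zero (ha0 _) (hc0 _)) (hb0 _)
  have hterm : ∀ j ∈ Finset.range (2 * p + 1),
      (x (2 * (j : ℤ)) ^ 2 * y (2 * (j : ℤ)) * z (2 * (j : ℤ) + 1)) /
        (x (2 * (j : ℤ) + 1) ^ 2 * y (2 * (j : ℤ) + 1) * z (2 * (j : ℤ))) =
      f (j + 1) / f j := by
    intro j _
    have h1 : (2 : ℤ) * ((j : ℤ) + 1) = 2 * (j : ℤ) + 2 := by ring
    have e2 : (2 : ℤ) * (j : ℤ) + 1 + 1 = 2 * (j : ℤ) + 2 := by ring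
    simp only [hf, hx, hy, hz, Nat.cast_add, Nat.cast_one, h1, e2]
    have A0 := ha0 (2*(j:ℤ)); have A1 := ha0 (2*(j:ℤ)+1); have A2 := ha0 (2*(j:ℤ)+2)
    have B0 := hb0 (2*(j:ℤ)); have B1 := hb0 (2*(j:ℤ)+1); have B2 := hb0 (2*(j:ℤ)+2)
    have C0 := hc0 (2*(j:ℤ)); have C1 := hc0 (2*(j:ℤ)+1); have C2 := hc0 (2*(j:ℤ)+2)
    field_simp
  rw [Finset.prod_congr rfl hterm, telescope_prod_div f hf0]
  have hn : (2 : ℤ) * ((2 * p + 1 : ℕ) : ℤ) = 0 + (4 * (p : ℤ) + 2) := by push_cast; ring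
  have ht3 : t (0 + 3) = t 3 := by norm_num
  have ht2 : t (0 + 2) = t 2 := by norm_num
  have ht1 : t (0 + 1) = t 1 := by norm_num
  simp only [hf, hn, haq 0, hbq 0, hcq 0, ht3, ht2, ht1, Nat.cast_zero, mul_zero]
  have A := ha0 0; have B := hb0 0; have C := hc0 0
  have T0 := ht0 0; have T1 := ht0 1; have T2 := ht0 2; have T3 := ht0 3
  field_simp
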